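/- An R-module M is w-split if and only if Ext¹_R(M,N) is GV-torsion for every R-module N. -/

import Mathlib

open CategoryTheory

universe u

section Defs
variable (R : Type u) [CommRing R]

/-- `J` is a Glaz–Vasconcelos ideal (GV-ideal): finitely generated and the natural map
`R → Hom_R(J, R)`, `r ↦ (x ↦ r•x)`, is an isomorphism. -/
def IsGVIdeal (J : Ideal R) : Prop :=
  J.FG ∧ Function.Bijective fun r : R =>
    ((LinearMap.lsmul R R r).comp J.subtype : J →ₗ[R] R)

variable (M : Type u) [AddCommGroup M] [Module R M]

/-- `M` is GV-torsion: every element is killed by some GV-ideal. -/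
def IsGVTorsion : Prop :=
  ∀ x : M, ∃ J : Ideal R, IsGVIdeal R J ∧ ∀ a ∈ J, a • x = 0

/-- `M` is GV-torsionfree: no nonzero element is killed by a GV-ideal. -/
def IsGVTorsionFree : Prop :=
  ∀ x : M, (∃ J : Ideal R, IsGVIdeal R J ∧ ∀ a ∈ J, a • x = 0) → x = 0

/-- The w-splitting condition on the epimorphism `g` of a short exact sequence:
there are a GV-ideal `⟨d₁,…,dₙ⟩` and maps `hₖ` with `g ∘ hₖ = (dₖ•·)`. -/
def IsWSplitSeq {B C : Type u} [AddCommGroup B] [Module R B] [AddCommGroup C] [Module R C]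
    (g : B →ₗ[R] C) : Prop :=
  ∃ (n : ℕ) (d : Fin n → R), IsGVIdeal R (Ideal.span (Set.range d)) ∧
    ∃ h : Fin n → (C →ₗ[R] B), ∀ k, ∀ c : C, g (h k c) = d k • c

/-- `M` is a w-split module: some short exact sequence `0 → K → P → M → 0` with
`P` projective is w-split. -/
def IsWSplitModule : Prop :=
  ∃ (P : Type u) (_ : AddCommGroup P) (_ : Module R P), Module.Projective R P ∧
    ∃ g : P →ₗ[R] M, Function.Surjective g ∧ IsWSplitSeq R g

/-- The Ext group `Ext^n_R(M, N)` as an object of `ModuleCat R`. -/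
noncomputable def extMod (n : ℕ) (N : Type u) [AddCommGroup N] [Module R N] : ModuleCat.{u} R :=
  ((Ext R (ModuleCat.{u} R) n).obj (Opposite.op (ModuleCat.of R M))).obj (ModuleCat.of R N)

/-- `M` is a w-module: GV-torsionfree and `Ext¹_R(R/J, M) = 0` for all GV-ideals `J`. -/
def IsWModule : Prop :=
  IsGVTorsionFree R M ∧
    ∀ J : Ideal R, IsGVIdeal R J → Subsingleton (extMod R (R ⧸ J) 1 M)

/-- `ι : M →ₗ E` exhibits `E` as a w-envelope `M_w` of the GV-torsionfree module `M`:
`E` is a w-module containing `M` with GV-torsion quotient `E/M`. -/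
def IsWEnvelope (E : Type u) [AddCommGroup E] [Module R E] (ι : M →ₗ[R] E) : Prop :=
  Function.Injective ι ∧ IsWModule R E ∧ IsGVTorsion R (E ⧸ LinearMap.range ι)

/-- `M` is w-projective: `Ext¹_R(L(M), N)` is GV-torsion for every GV-torsionfree
w-module `N`, where `L(M) = (M/tor_GV(M))_w`. -/
def IsWProjective : Prop :=
  ∀ (T : Submodule R M),
    (∀ x : M, x ∈ T ↔ ∃ J : Ideal R, IsGVIdeal R J ∧ ∀ a ∈ J, a • x = 0) →
    ∀ (L : Type u) (_ : AddCommGroup L) (_ : Module R L) (ι : (M ⧸ T) →ₗ[R] L),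
      IsWEnvelope R (M ⧸ T) L ι →
      ∀ (N : Type u) (_ : AddCommGroup N) (_ : Module R N),
        IsGVTorsionFree R N → IsWModule R N → IsGVTorsion R (extMod R L 1 N)

/-- `I` is a w-ideal: `I_w = I`, i.e. any `x` with `Jx ⊆ I` for some GV-ideal `J`
already lies in `I`. -/
def IsWIdeal (I : Ideal R) : Prop :=
  ∀ x : R, (∃ J : Ideal R, IsGVIdeal R J ∧ ∀ a ∈ J, a * x ∈ I) → x ∈ I

/-- `I` is a maximal w-ideal: maximal among proper w-ideals of `R`. -/
def IsMaximalWIdeal (I : Ideal R) : Prop :=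
  I ≠ ⊤ ∧ IsWIdeal R I ∧ ∀ I' : Ideal R, IsWIdeal R I' → I' ≠ ⊤ → I ≤ I' → I = I'

end Defs



/-! ### Auxiliary machinery -/

section AuxRes
open CategoryTheory.Limits CategoryTheory.ProjectiveResolution

variable {C : Type u} [Category.{v} C] [Abelian C] [EnoughProjectives C]
variable {X P : C} (g : P ⟶ X) [Projective P] [Epi g]

lemma myD_comp {X Y : C} (f : X ⟶ Y) : Projective.d f ≫ f = 0 :=
  (Category.assoc (Projective.π (kernel f)) (kernel.ι f) f).trans (by rw [kernel.condition]; exact comp_zero)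

noncomputable def myOfComplex : ChainComplex C ℕ :=
  ChainComplex.mk' P (Projective.syzygies g) (Projective.d g)
    (fun f => ⟨_, Projective.d f, myD_comp f⟩)

set_option linter.unusedSectionVars false

lemma myOfComplex_d_1_0 : (myOfComplex g).d 1 0 = Projective.d g := by simp [myOfComplex]

lemma myOfComplex_exactAt_succ (n : ℕ) :
    (myOfComplex g).ExactAt (n + 1) := by
  rw [HomologicalComplex.exactAt_iff' _ (n + 1 + 1) (n + 1) n (by simp) (by simp)]
  have hd : (myOfComplex g).d (n + 1 + 1) (n + 1) =
      (ChainComplex.mk'XIso P (Projective.syzygies g) (Projective.d g)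
        (fun f => ⟨_, Projective.d f, myD_comp f⟩) n).hom ≫
        Projective.d ((myOfComplex g).d (n + 1) n) :=
    ChainComplex.mk'_d _ _ _ _ n
  let α : ShortComplex.mk (Projective.d ((myOfComplex g).d (n + 1) n)) ((myOfComplex g).d (n + 1) n)
      (myD_comp _) ⟶ (myOfComplex g).sc' (n + 1 + 1) (n + 1) n :=
    { τ₁ := (ChainComplex.mk'XIso P (Projective.syzygies g) (Projective.d g)
        (fun f => ⟨_, Projective.d f, myD_comp f⟩) n).inv
      τ₂ := 𝟙 _
      τ₃ := 𝟙 _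
      comm₁₂ := by
        change _ ≫ (myOfComplex g).d (n + 1 + 1) (n + 1) = _ ≫ 𝟙 _
        rw [hd]
        exact (Iso.inv_hom_id_assoc _ _).trans (Category.comp_id _).symm
      comm₂₃ := (Category.id_comp _).trans (Category.comp_id _).symm }
  haveI : Epi α.τ₁ := inferInstanceAs (Epi (ChainComplex.mk'XIso P (Projective.syzygies g) (Projective.d g)
        (fun f => ⟨_, Projective.d f, myD_comp f⟩) n).inv)
  haveI : IsIso α.τ₂ := inferInstanceAs (IsIso (𝟙 _))
  haveI : Mono α.τ₃ := inferInstanceAs (Mono (𝟙 _))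
  exact (ShortComplex.exact_iff_of_epi_of_isIso_of_mono α).1 (exact_d_f _)

instance myOfComplex_projective (n : ℕ) : Projective ((myOfComplex g).X n) := by
  obtain (_ | _ | _ | n) := n
  · exact ‹Projective P›
  all_goals apply Projective.projective_over

noncomputable def myRes : ProjectiveResolution X where
  complex := myOfComplex g
  π := (ChainComplex.toSingle₀Equiv _ _).symm ⟨g, by
          rw [myOfComplex_d_1_0]; exact myD_comp g⟩
  quasiIso := ⟨fun n => by
    cases n
    · rw [ChainComplex.quasiIsoAt₀_iff, ShortComplex.quasiIso_iff_of_zeros']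
      · refine (ShortComplex.exact_and_epi_g_iff_of_iso ?_).2
          ⟨exact_d_f g, by dsimp; infer_instance⟩
        refine ShortComplex.isoMk (Iso.refl _) (Iso.refl _) (Iso.refl _)
          (by exact (Category.id_comp _).trans ((myOfComplex_d_1_0 g).symm.trans (Category.comp_id _).symm))
          (by exact (Category.id_comp _).trans ((ChainComplex.toSingle₀Equiv_symm_apply_f_zero (C := myOfComplex g) g
            (by rw [myOfComplex_d_1_0]; exact myD_comp g)).symm.trans (Category.comp_id _).symm))
      all_goals rfl
    · rw [quasiIsoAt_iff_exactAt']
      · apply myOfComplex_exactAt_succ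
      · apply ChainComplex.exactAt_succ_single_obj⟩

lemma myRes_pi_zero : (myRes g).π.f 0 = g :=
  ChainComplex.toSingle₀Equiv_symm_apply_f_zero _ _

end AuxRes

section AuxCompute
open CategoryTheory.Limits

variable {R : Type u} [CommRing R] {M P N : Type u}
  [AddCommGroup M] [Module R M] [AddCommGroup P] [Module R P] [AddCommGroup N] [Module R N]
  [Module.Projective R P] (g : P →ₗ[R] M) (hg : Function.Surjective g)

noncomputable def extEquiv :
    (extMod R M 1 N) ≃ₗ[R]
      ((LinearMap.ker g →ₗ[R] N) ⧸
        LinearMap.range (LinearMap.lcomp R N (LinearMap.ker g).subtype)) := by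
  haveI : Projective (ModuleCat.of R P) := (IsProjective.iff_projective P).1 ‹_›
  let g' : ModuleCat.of R P ⟶ ModuleCat.of R M := ModuleCat.ofHom g
  haveI : Epi g' := (ModuleCat.epi_iff_surjective g').2 hg
  let Pres := myRes g'
  let Cx := Pres.complex.linearYonedaObj R (ModuleCat.of R N)
  -- step 1 : extMod ≅ homology
  let i1 : extMod R M 1 N ≅ Cx.homology 1 := Pres.isoExt 1 (ModuleCat.of R N)
  let i2 : Cx.homology 1 ≅ (Cx.sc' 0 1 2).homology :=
    Cx.homologyIsoSc' 0 1 2 (by simp) (by simp)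
  let i3 : (Cx.sc' 0 1 2).homology ≅ (Cx.sc' 0 1 2).moduleCatLeftHomologyData.H :=
    (Cx.sc' 0 1 2).moduleCatHomologyIso
  -- facts
  have hd10 : LinearMap.range (Pres.complex.d 1 0).hom = LinearMap.ker g := by
    have h : LinearMap.range (Pres.complex.d 1 0).hom = LinearMap.ker (Pres.π.f 0).hom :=
      Pres.exact₀.moduleCat_range_eq_ker
    rw [myRes_pi_zero g'] at h
    exact h
  have hd21 : LinearMap.range (Pres.complex.d 2 1).hom = LinearMap.ker (Pres.complex.d 1 0).hom := by
    have h := myOfComplex_exactAt_succ g' 0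
    rw [HomologicalComplex.exactAt_iff' _ 2 1 0 (by simp) (by simp)] at h
    exact h.moduleCat_range_eq_ker
  -- the short complex of Hom modules
  set S := Cx.sc' 0 1 2 with hS
  have hSf : ∀ (φ : S.X₁), (S.f φ).hom = φ.hom.comp (Pres.complex.d 1 0).hom := by
    intro φ; rfl
  have hSg : ∀ (u : S.X₂), (S.g u).hom = u.hom.comp (Pres.complex.d 2 1).hom := by
    intro u; rfl
  -- concrete maps
  set K := LinearMap.ker g with hK
  let δ₁ : (Pres.complex.X 1 : Type u) →ₗ[R] P := (Pres.complex.d 1 0).hom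
  let δ₂ : (Pres.complex.X 2 : Type u) →ₗ[R] (Pres.complex.X 1 : Type u) := (Pres.complex.d 2 1).hom
  have hδ12 : ∀ x, δ₁ (δ₂ x) = 0 := by
    intro x
    have h := Pres.complex.d_comp_d 2 1 0
    exact LinearMap.congr_fun (congrArg ModuleCat.Hom.hom h : δ₁.comp δ₂ = 0) x
  let p : (Pres.complex.X 1 : Type u) →ₗ[R] K :=
    LinearMap.codRestrict K δ₁ (fun x => hd10 ▸ LinearMap.mem_range_self δ₁ x)
  have hp : ∀ x, ((p x : P)) = δ₁ x := fun _ => rfl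
  have hpsurj : Function.Surjective p := by
    rintro ⟨y, hy⟩
    rw [← hd10] at hy
    obtain ⟨x, hx⟩ := hy
    exact ⟨x, Subtype.ext hx⟩
  have hΦmem : ∀ v : K →ₗ[R] N,
      ((ModuleCat.homLinearEquiv (M := Pres.complex.X 1) (N := ModuleCat.of R N) (S := R)).symm (v.comp p) : S.X₂) ∈ LinearMap.ker S.g.hom := by
    intro v
    have h0 : (v.comp p).comp δ₂ = (0 : (Pres.complex.X 2 : Type u) →ₗ[R] N) := by
      ext x
      show v (p (δ₂ x)) = 0
      have : p (δ₂ x) = 0 := Subtype.ext (hδ12 x)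
      rw [this, map_zero]
    show S.g _ = 0
    exact ModuleCat.hom_ext ((hSg _).trans h0)
  let Φ : (K →ₗ[R] N) →ₗ[R] LinearMap.ker S.g.hom :=
    LinearMap.codRestrict (LinearMap.ker S.g.hom)
      ((ModuleCat.homLinearEquiv (M := Pres.complex.X 1) (N := ModuleCat.of R N) (S := R)).symm.toLinearMap ∘ₗ
        (LinearMap.lcomp R N p : (K →ₗ[R] N) →ₗ[R] ((Pres.complex.X 1 : Type u) →ₗ[R] N)) :
        (K →ₗ[R] N) →ₗ[R] S.X₂) hΦmem
  let Φq : (K →ₗ[R] N) →ₗ[R]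
      (LinearMap.ker S.g.hom ⧸ LinearMap.range S.moduleCatToCycles) :=
    (LinearMap.range S.moduleCatToCycles).mkQ.comp Φ
  have hle : LinearMap.range (LinearMap.lcomp R N K.subtype) ≤ LinearMap.ker Φq := by
    rintro _ ⟨φ, rfl⟩
    rw [LinearMap.mem_ker]
    show Submodule.Quotient.mk (Φ (LinearMap.lcomp R N K.subtype φ)) = 0
    rw [Submodule.Quotient.mk_eq_zero]
    refine ⟨(ModuleCat.ofHom φ : S.X₁), ?_⟩
    apply Subtype.ext
    apply ModuleCat.hom_ext
    show (S.f _).hom = ((LinearMap.lcomp R N K.subtype φ).comp p : (Pres.complex.X 1 : Type u) →ₗ[R] N)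
    exact hSf _
  let Φbar := Submodule.liftQ _ Φq hle
  have hsurj : Function.Surjective Φbar := by
    rintro z
    obtain ⟨⟨u, hu⟩, rfl⟩ := Submodule.Quotient.mk_surjective _ z
    let u' : (Pres.complex.X 1 : Type u) →ₗ[R] N := u.hom
    have hu0 : (S.g u).hom = (0 : (Pres.complex.X 2 : Type u) →ₗ[R] N) := by
      have h : S.g u = 0 := hu
      rw [h]
      rfl
    have hcomp : u'.comp δ₂ =
        (0 : (Pres.complex.X 2 : Type u) →ₗ[R] N) := (hSg u).symm.trans hu0
    have hker : LinearMap.ker p ≤ LinearMap.ker u' := by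
      intro x hx
      have hx0 : p x = 0 := hx
      have hx' : δ₁ x = 0 := (hp x).symm.trans (congrArg Subtype.val hx0)
      have : x ∈ LinearMap.range δ₂ := hd21 ▸ LinearMap.mem_ker.2 hx'
      obtain ⟨y, rfl⟩ := this
      exact LinearMap.congr_fun hcomp y
    let e := p.quotKerEquivOfSurjective hpsurj
    let v : K →ₗ[R] N :=
      ((LinearMap.ker p).liftQ u' hker).comp
        (e.symm : K →ₗ[R] _)
    have hvp : ∀ x, v (p x) = u' x := by
      intro x
      have he : e (Submodule.Quotient.mk x) = p x := by
        simp [e, LinearMap.quotKerEquivOfSurjective, LinearMap.quotKerEquivRange_apply_mk]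
      have hsymm : e.symm (p x) = Submodule.Quotient.mk x := by
        rw [← he, e.symm_apply_apply]
      show ((LinearMap.ker p).liftQ _ hker) (e.symm (p x)) = _
      rw [hsymm]
      rfl
    refine ⟨Submodule.Quotient.mk v, ?_⟩
    show Submodule.Quotient.mk (Φ v) = Submodule.Quotient.mk (⟨u, hu⟩ : LinearMap.ker S.g.hom)
    congr 1
    apply Subtype.ext
    apply ModuleCat.hom_ext
    exact LinearMap.ext hvp
  have hinj : Function.Injective Φbar := by
    rw [← LinearMap.ker_eq_bot, Submodule.eq_bot_iff]
    intro z hz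
    obtain ⟨v, rfl⟩ := Submodule.Quotient.mk_surjective _ z
    rw [LinearMap.mem_ker] at hz
    have hz' : Φ v ∈ LinearMap.range S.moduleCatToCycles := by
      rw [← Submodule.Quotient.mk_eq_zero]
      exact hz
    obtain ⟨φ, hφ⟩ := hz'
    let φ' : P →ₗ[R] N := φ.hom
    rw [Submodule.Quotient.mk_eq_zero]
    refine ⟨φ', ?_⟩
    have hφval : (S.f φ).hom = (v.comp p : (Pres.complex.X 1 : Type u) →ₗ[R] N) :=
      congrArg (fun z => ModuleCat.Hom.hom (Subtype.val z)) hφ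
    have hφcomp : φ'.comp δ₁ = (v.comp p : (Pres.complex.X 1 : Type u) →ₗ[R] N) :=
      (hSf φ).symm.trans hφval
    ext k
    obtain ⟨x, rfl⟩ := hpsurj k
    show φ' ((p x : P)) = v (p x)
    rw [hp x]
    exact LinearMap.congr_fun hφcomp x
  exact ((i1 ≪≫ i2 ≪≫ i3).toLinearEquiv).trans
    (LinearEquiv.ofBijective Φbar ⟨hinj, hsurj⟩).symm

end AuxCompute

section AuxAlg
variable {R : Type u} [CommRing R]

lemma smul_zero_of_mem_span {A : Type*} [AddCommGroup A] [Module R A] {n : ℕ}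
    (d : Fin n → R) (x : A) (h : ∀ k, d k • x = 0) :
    ∀ a ∈ Ideal.span (Set.range d), a • x = 0 := by
  intro a ha
  induction ha using Submodule.span_induction with
  | mem a ha => obtain ⟨k, rfl⟩ := ha; exact h k
  | zero => simp
  | add a b _ _ ha hb => rw [add_smul, ha, hb, add_zero]
  | smul r a _ ha => rw [smul_eq_mul, mul_smul, ha, smul_zero]

lemma isGVTorsion_congr {A B : Type u} [AddCommGroup A] [Module R A]
    [AddCommGroup B] [Module R B] (e : A ≃ₗ[R] B) (h : IsGVTorsion R A) :
    IsGVTorsion R B := by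
  intro x
  obtain ⟨J, hJ, hk⟩ := h (e.symm x)
  refine ⟨J, hJ, fun a ha => ?_⟩
  have := congrArg e (hk a ha)
  rwa [map_smul, e.apply_symm_apply, map_zero] at this

/-- Forward direction: a w-split sequence makes the concrete Ext presentation GV-torsion. -/
lemma torsion_of_wsplit {P M : Type u} [AddCommGroup P] [Module R P]
    [AddCommGroup M] [Module R M] (g : P →ₗ[R] M) (hws : IsWSplitSeq R g)
    (N : Type u) [AddCommGroup N] [Module R N] :
    IsGVTorsion R ((LinearMap.ker g →ₗ[R] N) ⧸
      LinearMap.range (LinearMap.lcomp R N (LinearMap.ker g).subtype)) := by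
  obtain ⟨n, d, hGV, h, hh⟩ := hws
  intro x
  refine ⟨Ideal.span (Set.range d), hGV, smul_zero_of_mem_span d x ?_⟩
  intro k
  obtain ⟨v, rfl⟩ := Submodule.Quotient.mk_surjective _ x
  rw [← Submodule.Quotient.mk_smul, Submodule.Quotient.mk_eq_zero]
  have hθ : ∀ y : P, (d k • y - h k (g y)) ∈ LinearMap.ker g := by
    intro y
    rw [LinearMap.mem_ker, map_sub, map_smul, hh k (g y), sub_self]
  let θ : P →ₗ[R] LinearMap.ker g :=
    LinearMap.codRestrict _ (d k • (LinearMap.id : P →ₗ[R] P) - ((h k).comp g)) hθ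
  refine ⟨v.comp θ, ?_⟩
  ext y
  show v (θ ((LinearMap.ker g).subtype y)) = (d k • v) y
  have hy : θ ((LinearMap.ker g).subtype y) = d k • y := by
    apply Subtype.ext
    show d k • (y : P) - h k (g (y : P)) = d k • (y : P)
    rw [LinearMap.mem_ker.mp y.2, map_zero, sub_zero]
  rw [hy, map_smul]
  rfl

/-- Backward direction: torsion of the concrete Ext presentation gives a w-splitting. -/
lemma wsplit_of_torsion {P M : Type u} [AddCommGroup P] [Module R P]
    [AddCommGroup M] [Module R M] (g : P →ₗ[R] M) (hg : Function.Surjective g)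
    (ht : IsGVTorsion R ((LinearMap.ker g →ₗ[R] LinearMap.ker g) ⧸
      LinearMap.range (LinearMap.lcomp R (LinearMap.ker g) (LinearMap.ker g).subtype))) :
    IsWSplitSeq R g := by
  obtain ⟨J, hJ, hkill⟩ := ht (Submodule.Quotient.mk LinearMap.id)
  obtain ⟨s, hs⟩ := hJ.1
  refine ⟨s.card, fun k => (s.equivFin.symm k : R), ?_, ?_⟩
  · have hrange : Set.range (fun k => (s.equivFin.symm k : R)) = (s : Set R) := by
      ext r
      constructor
      · rintro ⟨k, rfl⟩
        exact (s.equivFin.symm k).2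
      · intro hr
        exact ⟨s.equivFin ⟨r, hr⟩, by simp⟩
    rw [hrange, hs]
    exact hJ
  · have hmem : ∀ k : Fin s.card, ((s.equivFin.symm k : R)) ∈ J := by
      intro k
      rw [← hs]
      exact Ideal.subset_span (s.equivFin.symm k).2
    have key : ∀ k : Fin s.card, ∃ hk : M →ₗ[R] P,
        ∀ c : M, g (hk c) = (s.equivFin.symm k : R) • c := by
      intro k
      set a : R := (s.equivFin.symm k : R) with ha
      have h0 := hkill a (hmem k)
      rw [← Submodule.Quotient.mk_smul, Submodule.Quotient.mk_eq_zero] at h0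
      obtain ⟨φ, hφ⟩ := h0
      have hφ' : ∀ y : LinearMap.ker g, φ ((LinearMap.ker g).subtype y) = a • y :=
        fun y => LinearMap.congr_fun hφ y
      let ψ : P →ₗ[R] P :=
        a • (LinearMap.id : P →ₗ[R] P) - (LinearMap.ker g).subtype.comp φ
      have hψ : LinearMap.ker g ≤ LinearMap.ker ψ := by
        intro y hy
        rw [LinearMap.mem_ker]
        show a • y - (LinearMap.ker g).subtype (φ y) = 0
        have : φ y = a • (⟨y, hy⟩ : LinearMap.ker g) := hφ' ⟨y, hy⟩
        rw [this]
        show a • y - a • y = 0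
        rw [sub_self]
      let e := g.quotKerEquivOfSurjective hg
      refine ⟨((LinearMap.ker g).liftQ ψ hψ).comp (e.symm : M →ₗ[R] _), ?_⟩
      intro c
      obtain ⟨y, rfl⟩ := hg c
      have he : e (Submodule.Quotient.mk y) = g y := by
        simp [e, LinearMap.quotKerEquivOfSurjective, LinearMap.quotKerEquivRange_apply_mk]
      have hsymm : e.symm (g y) = Submodule.Quotient.mk y := by
        rw [← he, e.symm_apply_apply]
      show g (((LinearMap.ker g).liftQ ψ hψ) (e.symm (g y))) = a • g y
      rw [hsymm]
      show g (ψ y) = a • g y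
      show g (a • y - (LinearMap.ker g).subtype (φ y)) = a • g y
      rw [map_sub, map_smul]
      have h0 : g ((LinearMap.ker g).subtype (φ y)) = 0 := LinearMap.mem_ker.mp (φ y).2
      rw [h0, sub_zero]
    choose hk hhk using key
    exact ⟨hk, hhk⟩

end AuxAlg

/-- `M` is w-split iff `Ext¹_R(M, N)` is GV-torsion for every `R`-module `N`. -/
theorem stmt3 {R : Type u} [CommRing R] {M : Type u} [AddCommGroup M] [Module R M] :
    IsWSplitModule R M ↔
      ∀ (N : Type u) (_ : AddCommGroup N) (_ : Module R N),
        IsGVTorsion R (extMod R M 1 N) := by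
  constructor
  · rintro ⟨P, _, _, hproj, g, hg, hws⟩ N _ _
    haveI := hproj
    exact isGVTorsion_congr (extEquiv g hg).symm (torsion_of_wsplit g hws N)
  · intro hN
    let g : (M →₀ R) →ₗ[R] M := Finsupp.linearCombination R id
    have hg : Function.Surjective g := fun m =>
      ⟨Finsupp.single m 1, by simp [g]⟩
    have ht := hN (LinearMap.ker g) inferInstance inferInstance
    have ht' := isGVTorsion_congr (extEquiv g hg) ht
    exact ⟨M →₀ R, inferInstance, inferInstance, inferInstance, g, hg,
      wsplit_of_torsion g hg ht'⟩
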